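/- Under the setting of the p-level cascade extended state observer (matrices A, b, c, d; gains l_j = l(ω_j), ω_j = α^{j−1}ω₁; extended state z = (e, e', F*)ᵀ with e'' = F* − b̂μ; output y = e − n; level errors ζ̃_i = z − ξ_i − b·(bᵀ∑_{j<i} ξ_j)), the aggregated observation error ζ̃ = (ζ̃₁ᵀ, …, ζ̃_pᵀ)ᵀ : ℝ → ℝ^{3p} satisfies the linear differential equation ζ̃'(t) = H_ζ·ζ̃(t) + δ·(F*)'(t) + γ·n(t), where H_ζ ∈ ℝ^{3p×3p} is block lower triangular with diagonal blocks A − l_i·cᵀ (i = 1, …, p), subdiagonal blocks (l_i − b·(bᵀl_{i−1}))·cᵀ at position (i, i−1), blocks −b·(bᵀl_j − bᵀl_{j+1})·cᵀ at positions (i, j) for j ≤ i−2, δ = (bᵀ, …, bᵀ)ᵀ ∈ ℝ^{3p}, and γ ∈ ℝ^{3p} has first block l₁ and each block i ≥ 2 equal to (bᵀl₁)·b. -/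

import Mathlib

open Matrix

noncomputable section

/-- System matrix `A` of the extended error-domain state. -/
def Amat : Matrix (Fin 3) (Fin 3) ℝ := !![0,1,0; 0,0,1; 0,0,0]

/-- Vector `b = (0,0,1)ᵀ`. -/
def bvec : Fin 3 → ℝ := ![0,0,1]

/-- Vector `c = (1,0,0)ᵀ`. -/
def cvec : Fin 3 → ℝ := ![1,0,0]

/-- Vector `d = (0,1,0)ᵀ`. -/
def dvec : Fin 3 → ℝ := ![0,1,0]

/-- Bandwidth-parameterized observer gain `l(ω) = (3ω, 3ω², ω³)ᵀ`. -/
def gain (ω : ℝ) : Fin 3 → ℝ := ![3 * ω, 3 * ω ^ 2, ω ^ 3]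

/-- Level-`i` observation error `ζ̃ᵢ = z − ξᵢ − b (bᵀ ∑_{j=1}^{i-1} ξⱼ)`. -/
def zetaErr (e e' F : ℝ → ℝ) (ξ : ℕ → ℝ → Fin 3 → ℝ) (i : ℕ) (t : ℝ) : Fin 3 → ℝ :=
  ![e t, e' t, F t] - ξ i t - (bvec ⬝ᵥ ∑ j ∈ Finset.Icc 1 (i - 1), ξ j t) • bvec

/-- The block lower triangular system matrix `H_ζ ∈ ℝ^{3p×3p}` of the aggregated
observation-error dynamics.  The block index `i : Fin p` corresponds to cascade level
`i+1`, whose bandwidth is `ω_{i+1} = α^i ω₁`.  Diagonal blocks are `A − l(ωᵢ)cᵀ`,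
subdiagonal blocks are `(lᵢ − b(bᵀl_{i−1}))cᵀ`, and the blocks at positions `(i,j)` with
`j ≤ i − 2` are `−b(bᵀlⱼ − bᵀl_{j+1})cᵀ`. -/
def Hzeta (p : ℕ) (α ω₁ : ℝ) : Matrix (Fin p × Fin 3) (Fin p × Fin 3) ℝ :=
  fun q r =>
    if q.1 = r.1 then
      (Amat - vecMulVec (gain (α ^ (q.1 : ℕ) * ω₁)) cvec) q.2 r.2
    else if (r.1 : ℕ) + 1 = (q.1 : ℕ) then
      ((gain (α ^ (q.1 : ℕ) * ω₁) - (bvec ⬝ᵥ gain (α ^ (r.1 : ℕ) * ω₁)) • bvec) q.2) * cvec r.2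
    else if (r.1 : ℕ) + 2 ≤ (q.1 : ℕ) then
      -(bvec q.2 * (bvec ⬝ᵥ gain (α ^ (r.1 : ℕ) * ω₁)
          - bvec ⬝ᵥ gain (α ^ ((r.1 : ℕ) + 1) * ω₁)) * cvec r.2)
    else 0

/-- The disturbance input vector `δ = (bᵀ, …, bᵀ)ᵀ ∈ ℝ^{3p}`. -/
def deltaVec (p : ℕ) : Fin p × Fin 3 → ℝ := fun q => bvec q.2

/-- The noise input vector `γ ∈ ℝ^{3p}`: first block `l₁`, each block `i ≥ 2` equal to
`(bᵀl₁) b`. -/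
def gammaVec (p : ℕ) (α ω₁ : ℝ) : Fin p × Fin 3 → ℝ :=
  fun q => if (q.1 : ℕ) = 0 then gain ω₁ q.2 else (bvec ⬝ᵥ gain ω₁) * bvec q.2


lemma bdot (v : Fin 3 → ℝ) : bvec ⬝ᵥ v = v 2 := by
  simp [bvec, dotProduct, Fin.sum_univ_three]

lemma cdot (v : Fin 3 → ℝ) : cvec ⬝ᵥ v = v 0 := by
  simp [cvec, dotProduct, Fin.sum_univ_three]

lemma zeta0 (e e' F : ℝ → ℝ) (ξ : ℕ → ℝ → Fin 3 → ℝ) (j : ℕ) (t : ℝ) :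
    zetaErr e e' F ξ j t 0 = e t - ξ j t 0 := by
  simp only [zetaErr, Pi.sub_apply, Pi.smul_apply, smul_eq_mul, bvec,
    Matrix.cons_val_zero, mul_zero, sub_zero]

lemma abel_sum (g x : ℕ → ℝ) (m : ℕ) :
    ∑ j ∈ Finset.Icc 2 (m+1), (x (j-1) - x j) * g (j-1)
      = (∑ r ∈ Finset.range m, x (r+1) * (g (r+1) - g r)) + x 1 * g 0 - x (m+1) * g m := by
  induction m with
  | zero => simp
  | succ m ih =>
      rw [Finset.sum_Icc_succ_top (by omega), ih, Finset.sum_range_succ]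
      simp only [Nat.add_sub_cancel]
      ring

/-- Scalar form of row `i` (value `m = ↑i`) of the aggregated system, as a function of
the natural block-column index `r`. -/
def Wfun (α ω₁ : ℝ) (e e' F : ℝ → ℝ) (ξ : ℕ → ℝ → Fin 3 → ℝ) (t : ℝ) (k : Fin 3)
    (m r : ℕ) : ℝ :=
  if m = r then
    ∑ r2 : Fin 3, (Amat - vecMulVec (gain (α ^ m * ω₁)) cvec) k r2 * zetaErr e e' F ξ (r+1) t r2
  else if r + 1 = m then
    (gain (α ^ m * ω₁) k - (α ^ r * ω₁) ^ 3 * bvec k) * zetaErr e e' F ξ (r+1) t 0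
  else if r + 2 ≤ m then
    -(bvec k * ((α ^ r * ω₁) ^ 3 - (α ^ (r+1) * ω₁) ^ 3) * zetaErr e e' F ξ (r+1) t 0)
  else 0

/-- the aggregated observation error `ζ̃ = (ζ̃₁ᵀ, …, ζ̃_pᵀ)ᵀ` of the
`p`-level cascade extended state observer satisfies
`ζ̃' = H_ζ ζ̃ + δ (F*)' + γ n`. -/
theorem aggregated_observation_error_dynamics
    (p : ℕ) (hp : 2 ≤ p) (ω₁ : ℝ) (hω₁ : 0 < ω₁) (α : ℝ) (hα : 1 < α)
    (bhat : ℝ) (hbhat : bhat ≠ 0)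
    (μ n e e' e'' F F' : ℝ → ℝ)
    (he : ∀ t : ℝ, HasDerivAt e (e' t) t)
    (he' : ∀ t : ℝ, HasDerivAt e' (e'' t) t)
    (hF : ∀ t : ℝ, HasDerivAt F (F' t) t)
    (hdyn : ∀ t : ℝ, e'' t = F t - bhat * μ t)
    (ξ ξ' : ℕ → ℝ → Fin 3 → ℝ)
    (hξ : ∀ i : ℕ, 1 ≤ i → i ≤ p → ∀ t : ℝ, HasDerivAt (ξ i) (ξ' i t) t)
    (hobs1 : ∀ t : ℝ, ξ' 1 t =
      Amat.mulVec (ξ 1 t) - (bhat * μ t) • dvec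
        + (((e t - n t) - cvec ⬝ᵥ ξ 1 t)) • gain (α ^ (1 - 1) * ω₁))
    (hobsi : ∀ i : ℕ, 2 ≤ i → i ≤ p → ∀ t : ℝ, ξ' i t =
      Amat.mulVec (ξ i t)
        + (-(bhat * μ t) + bvec ⬝ᵥ ∑ j ∈ Finset.Icc 1 (i - 1), ξ j t) • dvec
        + (cvec ⬝ᵥ (ξ (i - 1) t - ξ i t)) • gain (α ^ (i - 1) * ω₁)) :
    ∀ t : ℝ,
      HasDerivAt (fun s => fun q : Fin p × Fin 3 => zetaErr e e' F ξ ((q.1 : ℕ) + 1) s q.2)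
        ((Hzeta p α ω₁).mulVec (fun q : Fin p × Fin 3 => zetaErr e e' F ξ ((q.1 : ℕ) + 1) t q.2)
          + F' t • deltaVec p + n t • gammaVec p α ω₁) t := by
  intro t
  rw [hasDerivAt_pi]
  rintro ⟨i, k⟩
  have hip : (i : ℕ) < p := i.isLt
  -- the derivative of the component, computed directly
  have hder : HasDerivAt (fun s => zetaErr e e' F ξ ((i:ℕ)+1) s k)
      (![e' t, e'' t, F' t] k - ξ' ((i:ℕ)+1) t k
        - (∑ j ∈ Finset.Icc 1 (i:ℕ), ξ' j t 2) * bvec k) t := by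
    have h1 : HasDerivAt (fun s => (![e s, e' s, F s] : Fin 3 → ℝ) k)
        (![e' t, e'' t, F' t] k) t := by
      fin_cases k
      · simpa using he t
      · simpa using he' t
      · simpa using hF t
    have h2 : HasDerivAt (fun s => ξ ((i:ℕ)+1) s k) (ξ' ((i:ℕ)+1) t k) t :=
      hasDerivAt_pi.1 (hξ ((i:ℕ)+1) (by omega) (by omega) t) k
    have h3 : HasDerivAt (fun s => ∑ j ∈ Finset.Icc 1 (i:ℕ), ξ j s 2)
        (∑ j ∈ Finset.Icc 1 (i:ℕ), ξ' j t 2) t := by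
      apply HasDerivAt.fun_sum
      intro j hj
      simp only [Finset.mem_Icc] at hj
      exact hasDerivAt_pi.1 (hξ j hj.1 (by omega) t) 2
    have hfe : (fun s => zetaErr e e' F ξ ((i:ℕ)+1) s k)
        = fun s => (![e s, e' s, F s] k - ξ ((i:ℕ)+1) s k
            - (∑ j ∈ Finset.Icc 1 (i:ℕ), ξ j s 2) * bvec k) := by
      funext s
      simp only [zetaErr, Pi.sub_apply, Pi.smul_apply, smul_eq_mul,
        Nat.add_sub_cancel, bdot, Finset.sum_apply]
    rw [hfe]
    exact (h1.sub h2).sub (h3.mul_const (bvec k))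
  refine hder.congr_deriv (Eq.symm ?_)
  -- value computation
  have hrow : ∀ r1 : Fin p,
      (∑ r2 : Fin 3, Hzeta p α ω₁ (i,k) (r1, r2) * zetaErr e e' F ξ ((r1:ℕ)+1) t r2)
        = Wfun α ω₁ e e' F ξ t k (i:ℕ) (r1:ℕ) := by
    intro r1
    rcases eq_or_ne i r1 with h | h
    · subst h
      simp [Hzeta, Wfun]
    · have h' : (i:ℕ) ≠ (r1:ℕ) := fun hc => h (Fin.ext hc)
      rcases eq_or_ne ((r1:ℕ)+1) (i:ℕ) with h2 | h2
      · simp only [Hzeta, Wfun, if_neg h, if_neg h', if_pos h2, Fin.sum_univ_three]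
        simp only [bdot]
        simp only [Pi.sub_apply, Pi.smul_apply, smul_eq_mul, gain, cvec, bvec,
          Matrix.cons_val_zero, Matrix.cons_val_one, Matrix.head_cons, Matrix.cons_val_two,
          Matrix.tail_cons, mul_zero, zero_mul, mul_one, add_zero]
        try ring
      · rcases le_or_gt ((r1:ℕ)+2) (i:ℕ) with h3 | h3
        · simp only [Hzeta, Wfun, if_neg h, if_neg h', if_neg h2, if_pos h3,
            Fin.sum_univ_three]
          simp only [bdot]
          simp only [Pi.sub_apply, Pi.smul_apply, smul_eq_mul, gain, cvec, bvec,
            Matrix.cons_val_zero, Matrix.cons_val_one, Matrix.head_cons, Matrix.cons_val_two,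
            Matrix.tail_cons, mul_zero, zero_mul, mul_one, add_zero]
          try ring
        · simp only [Hzeta, Wfun, if_neg h, if_neg h', if_neg h2,
            if_neg (show ¬((r1:ℕ)+2 ≤ (i:ℕ)) by omega), Fin.sum_univ_three]
          simp
  have hsum_eq : ((Hzeta p α ω₁).mulVec
        (fun q : Fin p × Fin 3 => zetaErr e e' F ξ ((q.1 : ℕ) + 1) t q.2)) (i, k)
      = ∑ r ∈ Finset.range p, Wfun α ω₁ e e' F ξ t k (i:ℕ) r := by
    have h0 : ((Hzeta p α ω₁).mulVec
          (fun q : Fin p × Fin 3 => zetaErr e e' F ξ ((q.1 : ℕ) + 1) t q.2)) (i, k)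
        = ∑ x : Fin p × Fin 3,
            Hzeta p α ω₁ (i,k) x * zetaErr e e' F ξ ((x.1 : ℕ) + 1) t x.2 := by
      simp [Matrix.mulVec, dotProduct]
    rw [h0]
    exact (Fintype.sum_prod_type (f := fun x : Fin p × Fin 3 =>
        Hzeta p α ω₁ (i,k) x * zetaErr e e' F ξ ((x.1 : ℕ) + 1) t x.2)).trans
      ((Finset.sum_congr rfl fun r1 _ => hrow r1).trans
        (Fin.sum_univ_eq_sum_range (fun r => Wfun α ω₁ e e' F ξ t k (i:ℕ) r) p))
  simp only [Pi.add_apply, Pi.smul_apply, smul_eq_mul, deltaVec, gammaVec, hsum_eq]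
  rcases Nat.eq_zero_or_pos (i:ℕ) with hm0 | hmpos
  · -- first block
    simp only [hm0]
    have hW0 : ∑ r ∈ Finset.range p, Wfun α ω₁ e e' F ξ t k 0 r
        = Wfun α ω₁ e e' F ξ t k 0 0 := by
      apply Finset.sum_eq_single_of_mem 0 (Finset.mem_range.2 (by omega))
      intro r _ hr
      simp only [Wfun]
      rw [if_neg (by omega), if_neg (by omega), if_neg (by omega)]
    rw [hW0, hobs1 t, hdyn t]
    have hempty : Finset.Icc 1 0 = (∅ : Finset ℕ) := by simp
    simp only [Wfun, if_pos rfl, hempty, Finset.sum_empty, zero_mul, sub_zero, zero_add]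
    fin_cases k <;>
      simp [zetaErr, Amat, bvec, cvec, dvec, gain, Matrix.vecMulVec, Matrix.mulVec,
        dotProduct, Fin.sum_univ_three, Finset.sum_apply, hempty,
        Matrix.vecHead, Matrix.vecTail] <;>
      ring
  · obtain ⟨m', hm'⟩ : ∃ m', (i:ℕ) = m' + 1 := ⟨(i:ℕ) - 1, by omega⟩
    simp only [hm']
    have hm2p : m' + 2 ≤ p := by omega
    have hs1 : ∑ r ∈ Finset.range p, Wfun α ω₁ e e' F ξ t k (m'+1) r
        = ∑ r ∈ Finset.range (m'+2), Wfun α ω₁ e e' F ξ t k (m'+1) r := by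
      refine (Finset.sum_subset (Finset.range_subset_range.2 hm2p) ?_).symm
      intro x hx hx2
      simp only [Finset.mem_range] at hx hx2
      simp only [Wfun]
      rw [if_neg (by omega), if_neg (by omega), if_neg (by omega)]
    rw [hs1, Finset.sum_range_succ, Finset.sum_range_succ]
    have hlow : ∀ r ∈ Finset.range m', Wfun α ω₁ e e' F ξ t k (m'+1) r
        = -(bvec k * ((α^r*ω₁)^3 - (α^(r+1)*ω₁)^3) * (e t - ξ (r+1) t 0)) := by
      intro r hr
      simp only [Finset.mem_range] at hr
      simp only [Wfun]
      rw [if_neg (by omega), if_neg (by omega), if_pos (by omega), zeta0]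
    rw [Finset.sum_congr rfl hlow]
    have hLw : ∑ r ∈ Finset.range m',
          -(bvec k * ((α^r*ω₁)^3 - (α^(r+1)*ω₁)^3) * (e t - ξ (r+1) t 0))
        = -(bvec k * e t * ((α^0*ω₁)^3 - (α^(m':ℕ)*ω₁)^3))
          - bvec k * ∑ r ∈ Finset.range m', ξ (r+1) t 0 * ((α^(r+1)*ω₁)^3 - (α^r*ω₁)^3) := by
      calc ∑ r ∈ Finset.range m',
            -(bvec k * ((α^r*ω₁)^3 - (α^(r+1)*ω₁)^3) * (e t - ξ (r+1) t 0))
          = ∑ r ∈ Finset.range m', ((-(bvec k * e t)) * ((α^r*ω₁)^3 - (α^(r+1)*ω₁)^3)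
              + (-(bvec k)) * (ξ (r+1) t 0 * ((α^(r+1)*ω₁)^3 - (α^r*ω₁)^3))) :=
            Finset.sum_congr rfl (fun r _ => by ring)
        _ = (-(bvec k * e t)) * (∑ r ∈ Finset.range m', ((α^r*ω₁)^3 - (α^(r+1)*ω₁)^3))
              + (-(bvec k)) * ∑ r ∈ Finset.range m',
                  ξ (r+1) t 0 * ((α^(r+1)*ω₁)^3 - (α^r*ω₁)^3) := by
            rw [Finset.sum_add_distrib, Finset.mul_sum, Finset.mul_sum]
        _ = _ := by
            rw [Finset.sum_range_sub' (fun r => (α^r*ω₁)^3) m']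
            ring
    rw [hLw]
    -- the ξ'-sum on the derivative side
    have hIns : Finset.Icc 1 (m'+1) = insert 1 (Finset.Icc 2 (m'+1)) := by
      ext a
      simp only [Finset.mem_Icc, Finset.mem_insert]
      omega
    have hS : ∑ j ∈ Finset.Icc 1 (m'+1), ξ' j t 2
        = (e t - n t - ξ 1 t 0) * ω₁^3
          + ((∑ r ∈ Finset.range m', ξ (r+1) t 0 * ((α^(r+1)*ω₁)^3 - (α^r*ω₁)^3))
              + ξ 1 t 0 * (α^0*ω₁)^3 - ξ (m'+1) t 0 * (α^(m':ℕ)*ω₁)^3) := by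
      rw [hIns, Finset.sum_insert (by simp)]
      congr 1
      · rw [hobs1 t]
        simp [Amat, dvec, gain, cvec, bvec, Matrix.mulVec, dotProduct, Fin.sum_univ_three,
          Matrix.vecHead, Matrix.vecTail]
        try ring
      · rw [← abel_sum (fun r => (α^r*ω₁)^3) (fun j => ξ j t 0) m']
        apply Finset.sum_congr rfl
        intro j hj
        simp only [Finset.mem_Icc] at hj
        rw [hobsi j (by omega) (by omega) t]
        simp [Amat, dvec, gain, cvec, bvec, Matrix.mulVec, dotProduct, Fin.sum_univ_three,
          Matrix.vecHead, Matrix.vecTail]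
        try ring
    rw [hS, hobsi (m'+1+1) (by omega) (by omega) t, hdyn t]
    -- reduce the remaining blocks
    have hd1 : Wfun α ω₁ e e' F ξ t k (m'+1) (m'+1)
        = ∑ r2 : Fin 3, (Amat - vecMulVec (gain (α ^ (m'+1) * ω₁)) cvec) k r2
            * zetaErr e e' F ξ (m'+2) t r2 := by
      simp only [Wfun, if_pos rfl, if_true]
    have hd2 : Wfun α ω₁ e e' F ξ t k (m'+1) m'
        = (gain (α ^ (m'+1) * ω₁) k - (α ^ m' * ω₁) ^ 3 * bvec k) * (e t - ξ (m'+1) t 0) := by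
      simp only [Wfun]
      rw [if_neg (by omega)]
      simp only [if_pos rfl, if_true, zeta0]
    rw [hd1, hd2]
    simp only [Nat.add_sub_cancel, bdot, Finset.sum_apply]
    fin_cases k <;>
      simp [zetaErr, Amat, bvec, cvec, dvec, gain, Matrix.vecMulVec, Matrix.mulVec,
        dotProduct, Fin.sum_univ_three, Finset.sum_apply, bdot,
        Matrix.vecHead, Matrix.vecTail] <;>
      ring
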